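/- Let n, M, W be positive integers. Let Q and Q' be n \times n matrices with natural number entries whose rows each sum to M, and let r, r' \in \mathbb{Z}^n be vectors with |r_j| \leq W and |r'_j| \leq W for all j. Fix an index i \in \{1,\dots,n\} and define the polynomial \Delta(X) := \det(M I - X Q') \cdot (\sum_{j=1}^{n} \mathrm{cof}_{ji}(M I - X Q) \, r_j) - \det(M I - X Q) \cdot (\sum_{j=1}^{n} \mathrm{cof}_{ji}(M I - X Q') \, r'_j) over \mathbb{Z}[X]. Then \Delta can be written as \sum_{k=0}^{2n-1} c_k X^k, where |c_k| \leq 2 n W M^{2n-1} \binom{2n-1}{k} for all k \in \{0,\dots,2n-1\}. -/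

import Mathlib

/-- The matrix `M I - X Q` over `ℤ[X]`: its `(i,j)` entry is `M δ_{ij} - Q_{ij} X`. -/
noncomputable def stochCharMatrix (n M : ℕ) (Q : Matrix (Fin n) (Fin n) ℕ) :
    Matrix (Fin n) (Fin n) (Polynomial ℤ) :=
  Matrix.of fun i j =>
    (if i = j then (M : Polynomial ℤ) else 0) - Polynomial.C (Q i j : ℤ) * Polynomial.X

/-- The `(j,i)` cofactor of an `(m+1) × (m+1)` matrix over `ℤ[X]`: `(-1)^(j+i)` times the
determinant of the matrix obtained by deleting row `j` and column `i`. -/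
noncomputable def cofactor (m : ℕ) (A : Matrix (Fin (m + 1)) (Fin (m + 1)) (Polynomial ℤ))
    (j i : Fin (m + 1)) : Polynomial ℤ :=
  (-1 : Polynomial ℤ) ^ ((j : ℕ) + (i : ℕ)) * (A.submatrix j.succAbove i.succAbove).det

open Polynomial Finset

/-- `P` dominates `p` coefficientwise. -/
def Dom (P p : Polynomial ℤ) : Prop := ∀ k, |p.coeff k| ≤ P.coeff k

lemma Dom.coeff_nonneg {P p : Polynomial ℤ} (h : Dom P p) (k : ℕ) : 0 ≤ P.coeff k :=
  (abs_nonneg _).trans (h k)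

lemma Dom.mul {P p Q q : Polynomial ℤ} (h : Dom P p) (h' : Dom Q q) : Dom (P * Q) (p * q) := by
  intro k
  rw [coeff_mul, coeff_mul]
  refine (Finset.abs_sum_le_sum_abs _ _).trans (Finset.sum_le_sum ?_)
  intro x _
  rw [abs_mul]
  exact mul_le_mul (h x.1) (h' x.2) (abs_nonneg _) (h.coeff_nonneg _)

lemma Dom.one : Dom 1 1 := by
  intro k
  rw [coeff_one]
  split <;> simp

lemma Dom.neg {P p : Polynomial ℤ} (h : Dom P p) : Dom P (-p) := by
  intro k; rw [coeff_neg, abs_neg]; exact h k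

lemma Dom.prod {ι : Type*} (s : Finset ι) (P p : ι → Polynomial ℤ)
    (h : ∀ i ∈ s, Dom (P i) (p i)) :
    Dom (∏ i ∈ s, P i) (∏ i ∈ s, p i) := by
  induction s using Finset.cons_induction with
  | empty => simpa using Dom.one
  | cons a s ha ih =>
    rw [prod_cons, prod_cons]
    exact (h a (mem_cons_self _ _)).mul (ih fun i hi => h i (mem_cons_of_mem hi))

/-- Key lemma: coefficientwise bound on determinants via row sums of dominators. -/
lemma dom_det {n : ℕ} (B D : Matrix (Fin n) (Fin n) (Polynomial ℤ)) (R : Fin n → Polynomial ℤ)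
    (h1 : ∀ i j, Dom (D i j) (B i j))
    (h2 : ∀ i k, ∑ j, (D i j).coeff k ≤ (R i).coeff k) :
    Dom (∏ i, R i) B.det := by
  intro k
  rw [← Matrix.det_transpose, Matrix.det_apply]
  have hrow : ∀ σ : Equiv.Perm (Fin n), ∀ i, B.transpose (σ i) i = B i (σ i) := fun _ _ => rfl
  calc |(∑ σ : Equiv.Perm (Fin n), Equiv.Perm.sign σ • ∏ i, B.transpose (σ i) i).coeff k|
      ≤ ∑ σ : Equiv.Perm (Fin n), |(Equiv.Perm.sign σ • ∏ i, B i (σ i)).coeff k| := by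
        rw [finset_sum_coeff]
        simp only [hrow]
        exact Finset.abs_sum_le_sum_abs _ _
    _ = ∑ σ : Equiv.Perm (Fin n), |(∏ i, B i (σ i)).coeff k| := by
        refine Finset.sum_congr rfl fun σ _ => ?_
        rcases Int.units_eq_one_or (Equiv.Perm.sign σ) with h | h <;>
          rw [h] <;> simp [Units.smul_def, coeff_neg]
    _ ≤ ∑ σ : Equiv.Perm (Fin n), (∏ i, D i (σ i)).coeff k := by
        refine Finset.sum_le_sum fun σ _ => ?_
        exact Dom.prod univ _ _ (fun i _ => h1 i (σ i)) k
    _ ≤ ∑ f ∈ (Finset.univ : Finset (Fin n → Fin n)), (∏ i, D i (f i)).coeff k := by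
        have hinj : Function.Injective (fun σ : Equiv.Perm (Fin n) => (σ : Fin n → Fin n)) :=
          fun _ _ h => Equiv.coe_fn_injective h
        rw [← Finset.sum_image (f := fun f : Fin n → Fin n => (∏ i, D i (f i)).coeff k)
          (fun x _ y _ h => hinj h)]
        refine Finset.sum_le_sum_of_subset_of_nonneg (Finset.subset_univ _) ?_
        intro f _ _
        exact ((Dom.prod univ (fun i => D i (f i)) (fun i => B i (f i))
          (fun i _ => h1 i (f i))).coeff_nonneg k)
    _ = (∏ i, ∑ j, D i j).coeff k := by
        rw [← finset_sum_coeff]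
        congr 1
        have hps := Finset.prod_univ_sum (t := fun _ : Fin n => (univ : Finset (Fin n)))
          (f := fun i j => D i j)
        rw [Fintype.piFinset_univ] at hps
        exact hps.symm
    _ ≤ (∏ i, R i).coeff k := by
        have hd : Dom (∏ i, R i) (∏ i, ∑ j, D i j) := by
          refine Dom.prod univ _ _ fun i _ => ?_
          intro t
          rw [finset_sum_coeff]
          calc |∑ j, (D i j).coeff t| ≤ ∑ j, |(D i j).coeff t| := Finset.abs_sum_le_sum_abs _ _
            _ = ∑ j, (D i j).coeff t := by
                refine Finset.sum_congr rfl fun j _ => abs_of_nonneg ((h1 i j).coeff_nonneg t)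
            _ ≤ (R i).coeff t := h2 i t
        exact (le_abs_self _).trans (hd k)

lemma dom_linear (a b : ℤ) : Dom (C |a| + C |b| * X) (C a + C b * X) := by
  intro k
  match k with
  | 0 => simp only [coeff_add, coeff_C, coeff_C_mul, coeff_X]; norm_num
  | 1 => simp only [coeff_add, coeff_C, coeff_C_mul, coeff_X]; norm_num
  | (k + 2) => simp only [coeff_add, coeff_C, coeff_C_mul, coeff_X]; norm_num

lemma sCM_eq (n M : ℕ) (Q : Matrix (Fin n) (Fin n) ℕ) (i j : Fin n) :
    stochCharMatrix n M Q i j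
      = C (if i = j then (M : ℤ) else 0) + C (-(Q i j : ℤ)) * X := by
  unfold stochCharMatrix
  rw [Matrix.of_apply]
  split <;> simp [map_neg, Polynomial.C_eq_natCast] <;> ring

theorem stmt_6 (m M W : ℕ) (hM : 0 < M) (hW : 0 < W)
    (Q Q' : Matrix (Fin (m + 1)) (Fin (m + 1)) ℕ)
    (hQ : ∀ i, ∑ j, Q i j = M) (hQ' : ∀ i, ∑ j, Q' i j = M)
    (r r' : Fin (m + 1) → ℤ)
    (hr : ∀ j, |r j| ≤ (W : ℤ)) (hr' : ∀ j, |r' j| ≤ (W : ℤ))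
    (i : Fin (m + 1)) (Δ : Polynomial ℤ)
    (hΔ : Δ =
      (stochCharMatrix (m + 1) M Q').det *
          (∑ j, cofactor m (stochCharMatrix (m + 1) M Q) j i * Polynomial.C (r j)) -
        (stochCharMatrix (m + 1) M Q).det *
          (∑ j, cofactor m (stochCharMatrix (m + 1) M Q') j i * Polynomial.C (r' j))) :
    Δ.natDegree ≤ 2 * (m + 1) - 1 ∧
      ∀ k ≤ 2 * (m + 1) - 1,
        |Δ.coeff k| ≤ 2 * ((m : ℤ) + 1) * (W : ℤ) * (M : ℤ) ^ (2 * (m + 1) - 1) *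
          ((2 * (m + 1) - 1).choose k : ℤ) := by
  classical
  set L : Polynomial ℤ := C (M : ℤ) + C (M : ℤ) * X with hL
  -- dominator matrix for a stochastic matrix
  have key : ∀ (P : Matrix (Fin (m + 1)) (Fin (m + 1)) ℕ), (∀ a, ∑ b, P a b = M) →
      (Dom (L ^ (m + 1)) (stochCharMatrix (m + 1) M P).det ∧
       ∀ j : Fin (m + 1), Dom (L ^ m)
         ((stochCharMatrix (m + 1) M P).submatrix j.succAbove i.succAbove).det) := by
    intro P hP
    set D : Matrix (Fin (m + 1)) (Fin (m + 1)) (Polynomial ℤ) :=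
      fun a b => C (if a = b then (M : ℤ) else 0) + C ((P a b : ℤ)) * X with hD
    have h1 : ∀ a b, Dom (D a b) (stochCharMatrix (m + 1) M P a b) := by
      intro a b
      rw [sCM_eq]
      have := dom_linear (if a = b then (M : ℤ) else 0) (-(P a b : ℤ))
      have ha : |if a = b then (M : ℤ) else 0| = if a = b then (M : ℤ) else 0 := by
        split <;> simp
      have hb : |(-(P a b : ℤ))| = (P a b : ℤ) := by simp
      rwa [ha, hb] at this
    have hDnn : ∀ a b k, 0 ≤ (D a b).coeff k := fun a b k => (h1 a b).coeff_nonneg k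
    have h2 : ∀ (a : Fin (m + 1)) k, ∑ b, (D a b).coeff k ≤ L.coeff k := by
      intro a k
      match k with
      | 0 =>
        simp only [hD, hL, coeff_add, coeff_C, coeff_C_mul, coeff_X, if_pos rfl]
        simp [Finset.sum_ite_eq]
      | 1 =>
        simp only [hD, hL, coeff_add, coeff_C, coeff_C_mul, coeff_X]
        norm_num
        exact le_of_eq (by exact_mod_cast hP a)
      | (k + 2) =>
        simp only [hD, hL, coeff_add, coeff_C, coeff_C_mul, coeff_X]
        norm_num
    constructor
    · have := dom_det (stochCharMatrix (m + 1) M P) D (fun _ => L) h1 h2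
      simpa [Finset.prod_const, Finset.card_univ] using this
    · intro j
      have h1' : ∀ a b, Dom (D (j.succAbove a) (i.succAbove b))
          (((stochCharMatrix (m + 1) M P).submatrix j.succAbove i.succAbove) a b) :=
        fun a b => h1 _ _
      have h2' : ∀ (a : Fin m) k,
          ∑ b, (D (j.succAbove a) (i.succAbove b)).coeff k ≤ L.coeff k := by
        intro a k
        refine le_trans ?_ (h2 (j.succAbove a) k)
        rw [Fin.sum_univ_succAbove (fun b => (D (j.succAbove a) b).coeff k) i]
        exact le_add_of_nonneg_left (hDnn _ _ _)
      have := dom_det ((stochCharMatrix (m + 1) M P).submatrix j.succAbove i.succAbove)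
        (fun a b => D (j.succAbove a) (i.succAbove b)) (fun _ => L) h1' h2'
      simpa [Finset.prod_const, Finset.card_univ] using this
  obtain ⟨hdet, hsub⟩ := key Q hQ
  obtain ⟨hdet', hsub'⟩ := key Q' hQ'
  -- domination of cofactors
  have hcof : ∀ (P : Matrix (Fin (m+1)) (Fin (m+1)) ℕ),
      (∀ j : Fin (m + 1), Dom (L ^ m)
        ((stochCharMatrix (m + 1) M P).submatrix j.succAbove i.succAbove).det) →
      ∀ j : Fin (m + 1), Dom (L ^ m) (cofactor m (stochCharMatrix (m + 1) M P) j i) := by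
    intro P hs j
    unfold cofactor
    rcases Nat.even_or_odd ((j : ℕ) + (i : ℕ)) with he | ho
    · rw [he.neg_one_pow, one_mul]; exact hs j
    · rw [ho.neg_one_pow, neg_one_mul]; exact (hs j).neg
  -- domination of the cofactor sums
  have hsum : ∀ (P : Matrix (Fin (m+1)) (Fin (m+1)) ℕ) (ρ : Fin (m + 1) → ℤ),
      (∀ j, |ρ j| ≤ (W : ℤ)) →
      (∀ j : Fin (m + 1), Dom (L ^ m) (cofactor m (stochCharMatrix (m + 1) M P) j i)) →
      Dom (C (((m : ℤ) + 1) * W) * L ^ m)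
        (∑ j, cofactor m (stochCharMatrix (m + 1) M P) j i * C (ρ j)) := by
    intro P ρ hρ hc k
    rw [finset_sum_coeff, coeff_C_mul]
    calc |∑ j, (cofactor m (stochCharMatrix (m + 1) M P) j i * C (ρ j)).coeff k|
        ≤ ∑ j, |(cofactor m (stochCharMatrix (m + 1) M P) j i * C (ρ j)).coeff k| :=
          Finset.abs_sum_le_sum_abs _ _
      _ ≤ ∑ _j : Fin (m + 1), (L ^ m).coeff k * W := by
          refine Finset.sum_le_sum fun j _ => ?_
          rw [coeff_mul_C, abs_mul]
          exact mul_le_mul (hc j k) (hρ j) (abs_nonneg _) ((hc j).coeff_nonneg k)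
      _ = ((m : ℤ) + 1) * W * (L ^ m).coeff k := by
          rw [Finset.sum_const, Finset.card_univ, Fintype.card_fin]
          push_cast; ring
  have hS := hsum Q r hr (hcof Q hsub)
  have hS' := hsum Q' r' hr' (hcof Q' hsub')
  -- domination of the two products
  set T : Polynomial ℤ := C (((m : ℤ) + 1) * W) * L ^ (2 * (m + 1) - 1) with hT
  have hP1 : Dom T ((stochCharMatrix (m + 1) M Q').det *
      (∑ j, cofactor m (stochCharMatrix (m + 1) M Q) j i * C (r j))) := by
    have := hdet'.mul hS
    have heq : L ^ (m + 1) * (C (((m : ℤ) + 1) * W) * L ^ m) = T := by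
      rw [hT, show 2 * (m + 1) - 1 = (m + 1) + m by omega, pow_add]
      ring
    rwa [heq] at this
  have hP2 : Dom T ((stochCharMatrix (m + 1) M Q).det *
      (∑ j, cofactor m (stochCharMatrix (m + 1) M Q') j i * C (r' j))) := by
    have := hdet.mul hS'
    have heq : L ^ (m + 1) * (C (((m : ℤ) + 1) * W) * L ^ m) = T := by
      rw [hT, show 2 * (m + 1) - 1 = (m + 1) + m by omega, pow_add]
      ring
    rwa [heq] at this
  -- coefficients of T
  have hTcoeff : ∀ k, T.coeff k
      = ((m : ℤ) + 1) * W * (M : ℤ) ^ (2 * (m + 1) - 1) * ((2 * (m + 1) - 1).choose k : ℤ) := by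
    intro k
    have hLC : L = C (M : ℤ) * (1 + X) := by rw [hL]; ring
    rw [hT, hLC, mul_pow, ← C_pow, coeff_C_mul, coeff_C_mul, coeff_one_add_X_pow]
    ring
  have hbound : ∀ k, |Δ.coeff k| ≤ 2 * T.coeff k := by
    intro k
    rw [hΔ, coeff_sub]
    calc |_ - _| ≤ |(_ : ℤ)| + |(_ : ℤ)| := abs_sub _ _
      _ ≤ T.coeff k + T.coeff k := add_le_add (hP1 k) (hP2 k)
      _ = 2 * T.coeff k := by ring
  constructor
  · rw [Polynomial.natDegree_le_iff_coeff_eq_zero]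
    intro N hN
    have h0 : T.coeff N = 0 := by
      rw [hTcoeff, Nat.choose_eq_zero_of_lt hN]
      simp
    have := hbound N
    rw [h0, mul_zero] at this
    exact abs_eq_zero.mp (le_antisymm this (abs_nonneg _))
  · intro k _
    calc |Δ.coeff k| ≤ 2 * T.coeff k := hbound k
      _ = 2 * ((m : ℤ) + 1) * (W : ℤ) * (M : ℤ) ^ (2 * (m + 1) - 1) *
          ((2 * (m + 1) - 1).choose k : ℤ) := by rw [hTcoeff]; ring
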